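/- The polynomial 100t⁵ + 495t⁴ + 2056t³ − 2928t² + 1408t − 256 has exactly one real root β₁, and β₁ lies in the interval (0.474, 0.475). -/

import Mathlib

private noncomputable def fQ : ℝ → ℝ := fun t =>
  100 * t ^ 5 + 495 * t ^ 4 + 2056 * t ^ 3 - 2928 * t ^ 2 + 1408 * t - 256

private lemma fQ_deriv (x : ℝ) :
    HasDerivAt fQ (500 * x ^ 4 + 1980 * x ^ 3 + 6168 * x ^ 2 - 5856 * x + 1408) x := by
  have h : HasDerivAt (fun t : ℝ =>
      100 * t ^ 5 + 495 * t ^ 4 + 2056 * t ^ 3 - 2928 * t ^ 2 + 1408 * t - 256)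
      (100 * (↑5 * x ^ 4) + 495 * (↑4 * x ^ 3) + 2056 * (↑3 * x ^ 2) - 2928 * (↑2 * x ^ 1)
        + 1408 * 1 - 0) x :=
    ((((((hasDerivAt_pow 5 x).const_mul 100).add
      ((hasDerivAt_pow 4 x).const_mul 495)).add
      ((hasDerivAt_pow 3 x).const_mul 2056)).sub
      ((hasDerivAt_pow 2 x).const_mul 2928)).add
      ((hasDerivAt_id x).const_mul 1408)).sub (hasDerivAt_const x 256)
  convert h using 1
  · rfl
  ring

private lemma fQ_strictMono : StrictMono fQ := by
  apply strictMono_of_deriv_pos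
  intro x
  rw [(fQ_deriv x).deriv]
  nlinarith [sq_nonneg (x ^ 2 + (99/50 : ℝ) * x - 1), sq_nonneg (x - 9690/26039),
    sq_nonneg x]

theorem stmt_7 :
    ∃ β₁ : ℝ, (0.474 : ℝ) < β₁ ∧ β₁ < (0.475 : ℝ) ∧
      100 * β₁ ^ 5 + 495 * β₁ ^ 4 + 2056 * β₁ ^ 3 - 2928 * β₁ ^ 2
        + 1408 * β₁ - 256 = 0 ∧
      ∀ t : ℝ, 100 * t ^ 5 + 495 * t ^ 4 + 2056 * t ^ 3 - 2928 * t ^ 2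
        + 1408 * t - 256 = 0 → t = β₁ := by
  have hcont : ContinuousOn fQ (Set.Icc (0.474 : ℝ) 0.475) := by
    unfold fQ; fun_prop
  have hab : (0.474 : ℝ) ≤ 0.475 := by norm_num
  have hlt : fQ 0.474 < 0 := by unfold fQ; norm_num
  have hgt : (0 : ℝ) < fQ 0.475 := by unfold fQ; norm_num
  have h0 : (0 : ℝ) ∈ Set.Ioo (fQ 0.474) (fQ 0.475) := ⟨hlt, hgt⟩
  obtain ⟨β₁, hβmem, hβ⟩ := intermediate_value_Ioo hab hcont h0
  refine ⟨β₁, hβmem.1, hβmem.2, hβ, ?_⟩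
  intro t ht
  have : fQ t = fQ β₁ := by unfold fQ at hβ ⊢; linarith
  exact fQ_strictMono.injective this
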